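/- Let E be a finite-dimensional real inner product space, f : E → ℝ a differentiable function, and let a > 0, c > 0 and θ ∈ [1/2, 1) be constants. Let t₁ ≤ t₂ be reals and let φ : ℝ → E be continuously differentiable on [t₁, t₂]. Assume that for every t ∈ [t₁, t₂]: f(φ(t)) > 0, f′(φ(t))(φ′(t)) ≤ −c·‖φ′(t)‖², and a·f(φ(t))^θ ≤ ‖φ′(t)‖. Then ‖φ(t₂) − φ(t₁)‖ ≤ (f(φ(t₁))^{1−θ} − f(φ(t₂))^{1−θ}) / (a·c·(1−θ)). -/
import Mathlib


open scoped Topology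

theorem norm_sub_le_of_gradient_flow_lojasiewicz
    {E : Type*} [NormedAddCommGroup E] [InnerProductSpace ℝ E] [FiniteDimensional ℝ E]
    (f : E → ℝ) (hf : Differentiable ℝ f)
    (a c θ : ℝ) (ha : 0 < a) (hc : 0 < c) (hθ₁ : 1/2 ≤ θ) (hθ₂ : θ < 1)
    (t₁ t₂ : ℝ) (ht : t₁ ≤ t₂) (φ φ' : ℝ → E)
    (hderiv : ∀ t ∈ Set.Icc t₁ t₂, HasDerivAt φ (φ' t) t)
    (hcont : ContinuousOn φ' (Set.Icc t₁ t₂))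
    (hpos : ∀ t ∈ Set.Icc t₁ t₂, 0 < f (φ t))
    (hdesc : ∀ t ∈ Set.Icc t₁ t₂, fderiv ℝ f (φ t) (φ' t) ≤ -c * ‖φ' t‖ ^ 2)
    (hLoj : ∀ t ∈ Set.Icc t₁ t₂, a * f (φ t) ^ θ ≤ ‖φ' t‖) :
    ‖φ t₂ - φ t₁‖ ≤ (f (φ t₁) ^ (1 - θ) - f (φ t₂) ^ (1 - θ)) / (a * c * (1 - θ)) := by
  have hθ : 0 < 1 - θ := by linarith
  set B : ℝ → ℝ := fun t => (f (φ t₁) ^ (1 - θ) - f (φ t) ^ (1 - θ)) / (a * c * (1 - θ))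
    with hB_def
  set B' : ℝ → ℝ := fun t =>
    -(fderiv ℝ f (φ t) (φ' t) * (1 - θ) * f (φ t) ^ (1 - θ - 1)) / (a * c * (1 - θ)) with hB'_def
  have hφc : ContinuousOn φ (Set.Icc t₁ t₂) := fun t ht' =>
    (hderiv t ht').continuousAt.continuousWithinAt
  have hBc : ContinuousOn B (Set.Icc t₁ t₂) := by
    apply ContinuousOn.div_const
    apply ContinuousOn.sub continuousOn_const
    exact (hf.continuous.comp_continuousOn hφc).rpow_const fun t ht' => Or.inr hθ.le
  have hBd : ∀ x ∈ Set.Ico t₁ t₂, HasDerivWithinAt B (B' x) (Set.Ici x) x := by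
    intro x hx
    have hx' : x ∈ Set.Icc t₁ t₂ := Set.Ico_subset_Icc_self hx
    have hg : HasDerivAt (fun t => f (φ t)) (fderiv ℝ f (φ x) (φ' x)) x :=
      (hf (φ x)).hasFDerivAt.comp_hasDerivAt x (hderiv x hx')
    have hg2 : HasDerivAt (fun t => f (φ t) ^ (1 - θ))
        (fderiv ℝ f (φ x) (φ' x) * (1 - θ) * f (φ x) ^ (1 - θ - 1)) x :=
      hg.rpow_const (Or.inl (hpos x hx').ne')
    exact (((hg2.const_sub _).div_const _).hasDerivWithinAt).mono (fun y hy => trivial)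
  have key : ∀ x ∈ Set.Icc t₁ t₂, ‖φ x - φ t₁‖ ≤ B x := by
    apply image_norm_le_of_norm_deriv_right_le_deriv_boundary'
      (f' := φ') ((hφc.sub continuousOn_const)) ?_ ?_ hBc hBd ?_
    · intro x hx
      exact (((hderiv x (Set.Ico_subset_Icc_self hx)).sub_const _).hasDerivWithinAt).mono
        (fun y hy => trivial)
    · simp [hB_def]
    · intro x hx
      have hx' : x ∈ Set.Icc t₁ t₂ := Set.Ico_subset_Icc_self hx
      have hG : 0 < f (φ x) := hpos x hx'
      have hpq : f (φ x) ^ θ * f (φ x) ^ (1 - θ - 1) = 1 := by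
        rw [← Real.rpow_add hG]
        norm_num
      have hp : 0 < f (φ x) ^ θ := Real.rpow_pos_of_pos hG θ
      have hq : 0 < f (φ x) ^ (1 - θ - 1) := Real.rpow_pos_of_pos hG _
      have h1 := hdesc x hx'
      have h2 := hLoj x hx'
      have hn : 0 ≤ ‖φ' x‖ := norm_nonneg _
      rw [hB'_def]
      simp only
      rw [le_div_iff₀ (by positivity)]
      have hcn : c * ‖φ' x‖ ^ 2 ≤ -(fderiv ℝ f (φ x) (φ' x)) := by linarith
      have e0 : a * c * ‖φ' x‖
          = c * ‖φ' x‖ * (a * f (φ x) ^ θ) * f (φ x) ^ (1 - θ - 1) := by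
        rw [show c * ‖φ' x‖ * (a * f (φ x) ^ θ) * f (φ x) ^ (1 - θ - 1)
            = a * c * ‖φ' x‖ * (f (φ x) ^ θ * f (φ x) ^ (1 - θ - 1)) from by ring, hpq, mul_one]
      have e1 : c * ‖φ' x‖ * (a * f (φ x) ^ θ) * f (φ x) ^ (1 - θ - 1)
          ≤ c * ‖φ' x‖ * ‖φ' x‖ * f (φ x) ^ (1 - θ - 1) :=
        mul_le_mul_of_nonneg_right (mul_le_mul_of_nonneg_left h2 (by positivity)) hq.le
      have e2 : c * ‖φ' x‖ ^ 2 * f (φ x) ^ (1 - θ - 1)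
          ≤ -(fderiv ℝ f (φ x) (φ' x)) * f (φ x) ^ (1 - θ - 1) :=
        mul_le_mul_of_nonneg_right hcn hq.le
      have hchain : a * c * ‖φ' x‖
          ≤ -(fderiv ℝ f (φ x) (φ' x)) * f (φ x) ^ (1 - θ - 1) := by nlinarith [e0, e1, e2]
      nlinarith [mul_le_mul_of_nonneg_left hchain hθ.le]
  exact key t₂ ⟨ht, le_refl _⟩
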